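/- Let h ∈ {1,…,n} be such that |λ_h|/κ(h) ≤ |λ_k|/κ(k) for all k = 1,…,n. Then with c = cos(hπ/(n+1)), δ* = 2(n c² δ − (n−1) c σ)/(n−1+2n c²), σ* = ((n−1)σ − n c δ)/(n−1+2n c²), the matrix S*^𝒯 = (n; δ*, σ*) attains the minimum of ‖T − S‖_F over all S ∈ 𝒮 ∩ 𝒯, and the structured distance to singularity of T is d_F^𝒯(T) = min_{S ∈ 𝒮 ∩ 𝒯} ‖T − S‖_F = |λ_h|/κ(h). -/

import Mathlib

open Real Filter

noncomputable def tridiag (n : ℕ) (d s : ℝ) : Matrix (Fin n) (Fin n) ℝ :=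
  Matrix.of fun i j =>
    if (i : ℕ) = (j : ℕ) then d
    else if (i : ℕ) + 1 = (j : ℕ) ∨ (j : ℕ) + 1 = (i : ℕ) then s else 0

noncomputable def lam (n : ℕ) (δ σ : ℝ) (h : ℕ) : ℝ :=
  δ + 2 * σ * Real.cos (h * Real.pi / (n + 1))

noncomputable def kap (n h : ℕ) : ℝ :=
  Real.sqrt (1 / (n : ℝ) + 2 / ((n : ℝ) - 1) * Real.cos (h * Real.pi / (n + 1)) ^ 2)

noncomputable def evec (n h : ℕ) : Fin n → ℝ :=
  fun k => Real.sqrt (2 / (n + 1)) * Real.sin (h * (k.1 + 1) * Real.pi / (n + 1))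

noncomputable def frobNorm {n : ℕ} (A : Matrix (Fin n) (Fin n) ℝ) : ℝ :=
  Real.sqrt (∑ i, ∑ j, A i j ^ 2)

lemma tridiag_apply_decomp (n : ℕ) (d s : ℝ) (i j : Fin n) :
    tridiag n d s i j = (if (i : ℕ) = (j : ℕ) then d else 0)
      + (if (i : ℕ) + 1 = (j : ℕ) then s else 0)
      + (if (j : ℕ) + 1 = (i : ℕ) then s else 0) := by
  simp only [tridiag, Matrix.of_apply]
  split_ifs <;> (try (exfalso; omega)) <;> ring

lemma sum_ite_nat_eq {n : ℕ} (m : ℕ) (f : Fin n → ℝ) :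
    (∑ j : Fin n, if m = (j : ℕ) then f j else 0)
      = if hm : m < n then f ⟨m, hm⟩ else 0 := by
  split_ifs with hm
  · rw [Finset.sum_eq_single (⟨m, hm⟩ : Fin n)]
    · simp
    · intro j _ hj
      rw [if_neg]
      intro hmj
      exact hj (by exact Fin.ext hmj.symm)
    · simp
  · apply Finset.sum_eq_zero
    intro j _
    rw [if_neg]
    omega

lemma sum_ite_nat_succ {n : ℕ} (m : ℕ) (f : Fin n → ℝ) :
    (∑ j : Fin n, if (j : ℕ) + 1 = m then f j else 0)
      = if hm : m - 1 < n ∧ 1 ≤ m then f ⟨m - 1, hm.1⟩ else 0 := by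
  split_ifs with hm
  · rw [Finset.sum_eq_single (⟨m - 1, hm.1⟩ : Fin n)]
    · rw [if_pos (show ((⟨m - 1, hm.1⟩ : Fin n) : ℕ) + 1 = m by simp only [Fin.val_mk]; omega)]
    · intro j _ hj
      rw [if_neg]
      intro hmj
      apply hj
      apply Fin.ext
      simp only
      omega
    · simp
  · apply Finset.sum_eq_zero
    intro j _
    rw [if_neg]
    omega

lemma sin_rec (A B : ℝ) : Real.sin (A - B) + Real.sin (A + B) = 2 * Real.sin A * Real.cos B := by
  rw [Real.sin_sub, Real.sin_add]; ring

lemma tridiag_mulVec (n : ℕ) (hn : 1 ≤ n) (d s : ℝ) (k : ℕ) (hk1 : 1 ≤ k) (hkn : k ≤ n) :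
    (tridiag n d s).mulVec (evec n k)
      = fun i => (d + 2 * s * Real.cos (k * Real.pi / (n + 1))) * evec n k i := by
  set C : ℝ := Real.sqrt (2 / (n + 1)) with hC
  set u : ℕ → ℝ := fun m => C * Real.sin (k * m * Real.pi / (n + 1)) with hu
  have hu0 : u 0 = 0 := by simp [hu]
  have hun : u (n + 1) = 0 := by
    have : (k : ℝ) * (↑(n + 1)) * Real.pi / (n + 1) = (k : ℝ) * Real.pi := by
      push_cast
      field_simp
    simp only [hu, this]
    rw [Real.sin_nat_mul_pi]
    ring
  have hrec : ∀ m : ℕ, u m + u (m + 2)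
      = 2 * Real.cos (k * Real.pi / (n + 1)) * u (m + 1) := by
    intro m
    have h1 : (k : ℝ) * (m : ℝ) * Real.pi / (n + 1)
        = (k : ℝ) * (↑(m + 1)) * Real.pi / (n + 1) - k * Real.pi / (n + 1) := by
      push_cast; ring
    have h2 : (k : ℝ) * (↑(m + 2)) * Real.pi / (n + 1)
        = (k : ℝ) * (↑(m + 1)) * Real.pi / (n + 1) + k * Real.pi / (n + 1) := by
      push_cast; ring
    simp only [hu, h1, h2]
    rw [← mul_add, sin_rec]
    ring
  have hev : ∀ j : Fin n, evec n k j = u (j.1 + 1) := by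
    intro j
    simp only [evec, hu, hC]
    push_cast
    ring_nf
  funext i
  simp only [Matrix.mulVec, dotProduct]
  have hsplit : ∀ j : Fin n, tridiag n d s i j * evec n k j
      = (if (i : ℕ) = (j : ℕ) then d * evec n k j else 0)
        + (if (i : ℕ) + 1 = (j : ℕ) then s * evec n k j else 0)
        + (if (j : ℕ) + 1 = (i : ℕ) then s * evec n k j else 0) := by
    intro j
    rw [tridiag_apply_decomp]
    split_ifs <;> ring
  rw [Finset.sum_congr rfl fun j _ => hsplit j]
  rw [Finset.sum_add_distrib, Finset.sum_add_distrib]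
  rw [sum_ite_nat_eq (i : ℕ) (fun j => d * evec n k j),
      sum_ite_nat_eq ((i : ℕ) + 1) (fun j => s * evec n k j),
      sum_ite_nat_succ (i : ℕ) (fun j => s * evec n k j)]
  have hi : (i : ℕ) < n := i.2
  have e1 : (if hm : (i : ℕ) < n then d * evec n k ⟨i, hm⟩ else 0) = d * u (i.1 + 1) := by
    rw [dif_pos hi, hev]
  have e2 : (if hm : (i : ℕ) + 1 < n then s * evec n k ⟨i.1 + 1, hm⟩ else 0)
      = s * u (i.1 + 2) := by
    split_ifs with hm
    · rw [hev]
    · have : i.1 + 2 = n + 1 := by omega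
      rw [this, hun]; ring
  have e3 : (if hm : (i : ℕ) - 1 < n ∧ 1 ≤ (i : ℕ) then s * evec n k ⟨i.1 - 1, hm.1⟩ else 0)
      = s * u i.1 := by
    split_ifs with hm
    · rw [hev]
      simp only [Fin.val_mk]
      congr 3
      omega
    · have : i.1 = 0 := by omega
      rw [this, hu0]; ring
  rw [e1, e2, e3, hev]
  linear_combination s * hrec i.1

lemma evec_ne_zero (n : ℕ) (hn : 1 ≤ n) (k : ℕ) (hk1 : 1 ≤ k) (hkn : k ≤ n) :
    evec n k ≠ 0 := by
  intro h0
  have h1 : evec n k ⟨0, by omega⟩ = 0 := by rw [h0]; rfl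
  have hnp : (0:ℝ) < (n:ℝ) + 1 := by positivity
  have harg : (0:ℝ) < (k:ℝ) * (0 + 1) * Real.pi / (n + 1) := by
    have : (0:ℝ) < (k:ℝ) := by exact_mod_cast hk1
    positivity
  have harg2 : (k:ℝ) * (0 + 1) * Real.pi / (n + 1) < Real.pi := by
    rw [div_lt_iff₀ hnp]
    have hk : (k:ℝ) ≤ (n:ℝ) := by exact_mod_cast hkn
    nlinarith [Real.pi_pos]
  have hs : 0 < Real.sin ((k:ℝ) * (0 + 1) * Real.pi / (n + 1)) :=
    Real.sin_pos_of_pos_of_lt_pi harg harg2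
  have hc : 0 < Real.sqrt (2 / ((n:ℝ) + 1)) := Real.sqrt_pos.mpr (by positivity)
  have : evec n k ⟨0, by omega⟩ > 0 := by
    simp only [evec]
    push_cast
    positivity
  linarith [this, h1.le]

lemma tridiag_det_zero (n : ℕ) (hn : 1 ≤ n) (d s : ℝ) (k : ℕ) (hk1 : 1 ≤ k) (hkn : k ≤ n)
    (hz : d + 2 * s * Real.cos (k * Real.pi / (n + 1)) = 0) :
    (tridiag n d s).det = 0 := by
  rw [← Matrix.exists_mulVec_eq_zero_iff]
  refine ⟨evec n k, evec_ne_zero n hn k hk1 hkn, ?_⟩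
  rw [tridiag_mulVec n hn d s k hk1 hkn]
  funext i
  simp [hz]

lemma tridiag_singular_eigen (n : ℕ) (hn : 2 ≤ n) (d s : ℝ)
    (hdet : (tridiag n d s).det = 0) :
    ∃ k : ℕ, 1 ≤ k ∧ k ≤ n ∧ d + 2 * s * Real.cos (k * Real.pi / (n + 1)) = 0 := by
  by_cases hs : s = 0
  · -- diagonal case
    have hdiag : tridiag n d s = d • (1 : Matrix (Fin n) (Fin n) ℝ) := by
      ext i j
      simp only [tridiag, Matrix.of_apply, Matrix.smul_apply, Matrix.one_apply, smul_eq_mul]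
      by_cases hij : (i : ℕ) = (j : ℕ)
      · rw [if_pos hij, if_pos (Fin.ext hij), mul_one]
      · rw [if_neg hij, hs, if_neg (show ¬i = j from fun h' => hij (by rw [h'])), mul_zero]
        split_ifs <;> rfl
    rw [hdiag, Matrix.det_smul, Matrix.det_one, mul_one, Fintype.card_fin] at hdet
    have hd : d = 0 := pow_eq_zero_iff (by omega) |>.mp hdet
    exact ⟨1, le_refl 1, by omega, by rw [hd, hs]; ring⟩
  · by_contra hno
    push_neg at hno
    set μ : Fin n → ℝ := fun k => d + 2 * s * Real.cos ((k.1 + 1) * Real.pi / (n + 1)) with hμ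
    set v : Fin n → (Fin n → ℝ) := fun k => evec n (k.1 + 1) with hv
    have hπ : (0:ℝ) < Real.pi := Real.pi_pos
    have hn1 : (0:ℝ) < (n:ℝ) + 1 := by positivity
    have hmem : ∀ k : Fin n, ((k.1 + 1 : ℕ) : ℝ) * Real.pi / (n + 1) ∈ Set.Icc 0 Real.pi := by
      intro k
      constructor
      · positivity
      · rw [div_le_iff₀ hn1]
        have : ((k.1 + 1 : ℕ) : ℝ) ≤ (n:ℝ) := by exact_mod_cast (by omega : k.1 + 1 ≤ n) 
        nlinarith
    have hinj : Function.Injective μ := by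
      intro k l hkl
      simp only [hμ] at hkl
      have hcos : Real.cos ((k.1 + 1) * Real.pi / (n + 1))
          = Real.cos ((l.1 + 1) * Real.pi / (n + 1)) := by
        have hs2 : (2:ℝ) * s ≠ 0 := by simpa using hs
        exact mul_left_cancel₀ hs2 (by linarith)
      have h1 := hmem k
      have h2 := hmem l
      push_cast at h1 h2 hcos
      have heq := Real.injOn_cos h1 h2 hcos
      have hne : ((n:ℝ)+1) ≠ 0 := ne_of_gt hn1
      field_simp [hne] at heq
      have hkl' : ((k.1:ℕ):ℝ) = (l.1:ℝ) := by linarith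
      exact Fin.ext (by exact_mod_cast hkl')
    have hμne : ∀ k : Fin n, μ k ≠ 0 := by
      intro k hk0
      apply hno (k.1 + 1) (by omega) (by omega)
      simp only [hμ] at hk0
      push_cast
      exact hk0
    set f : Module.End ℝ (Fin n → ℝ) := Matrix.mulVecLin (tridiag n d s) with hf
    have hev : ∀ k : Fin n, f.HasEigenvector (μ k) (v k) := by
      intro k
      constructor
      · rw [Module.End.mem_eigenspace_iff]
        show (tridiag n d s).mulVec (v k) = μ k • v k
        rw [hv]
        simp only
        rw [tridiag_mulVec n (by omega) d s (k.1 + 1) (by omega) (by omega)]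
        funext i
        simp only [Pi.smul_apply, smul_eq_mul, hμ]
        push_cast
        ring
      · exact evec_ne_zero n (by omega) (k.1 + 1) (by omega) (by omega)
    have hli : LinearIndependent ℝ v :=
      Module.End.eigenvectors_linearIndependent' f μ hinj v hev
    haveI : Nonempty (Fin n) := ⟨⟨0, by omega⟩⟩
    have hspan : Submodule.span ℝ (Set.range v) = ⊤ :=
      hli.span_eq_top_of_card_eq_finrank
        (by rw [Fintype.card_fin, Module.finrank_fin_fun])
    obtain ⟨w, hw0, hww⟩ := (Matrix.exists_mulVec_eq_zero_iff).mpr hdet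
    have hwmem : w ∈ Submodule.span ℝ (Set.range v) := hspan ▸ Submodule.mem_top
    obtain ⟨cf, hcf⟩ := Submodule.mem_span_range_iff_exists_fun ℝ |>.mp hwmem
    have hexp : ∑ i : Fin n, (cf i * μ i) • v i = 0 := by
      have hfw : f w = 0 := hww
      rw [← hcf, map_sum] at hfw
      rw [← hfw]
      apply Finset.sum_congr rfl
      intro i _
      rw [map_smul, (hev i).apply_eq_smul, smul_smul]
    have hcf0 : ∀ i : Fin n, cf i = 0 := by
      intro i
      have := linearIndependent_iff'.mp hli Finset.univ (fun i => cf i * μ i) hexp i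
        (Finset.mem_univ i)
      exact (mul_eq_zero.mp this).resolve_right (hμne i)
    apply hw0
    rw [← hcf]
    apply Finset.sum_eq_zero
    intro i _
    rw [hcf0 i, zero_smul]

lemma tridiag_sub (n : ℕ) (a b d s : ℝ) :
    tridiag n a b - tridiag n d s = tridiag n (a - d) (b - s) := by
  ext i j
  simp only [Matrix.sub_apply, tridiag, Matrix.of_apply]
  split_ifs <;> ring

lemma sum_range_ite_succ_lt (N : ℕ) (x : ℝ) :
    (∑ m ∈ Finset.range (N + 1), if m + 1 < N + 1 then x else 0) = N * x := by
  rw [Finset.sum_range_succ, if_neg (by omega)]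
  rw [Finset.sum_congr rfl (fun m hm => if_pos (by simp at hm; omega))]
  simp [Finset.sum_const]

lemma sum_range_ite_one_le (N : ℕ) (x : ℝ) :
    (∑ m ∈ Finset.range (N + 1), if 1 ≤ m then x else 0) = N * x := by
  rw [Finset.sum_range_succ']
  rw [Finset.sum_congr rfl (fun m _ => if_pos (by omega))]
  simp [Finset.sum_const]

lemma tridiag_frob_sq (n : ℕ) (hn : 1 ≤ n) (a b : ℝ) :
    (∑ i, ∑ j, (tridiag n a b i j) ^ 2)
      = n * a ^ 2 + 2 * ((n : ℝ) - 1) * b ^ 2 := by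
  have hsq : ∀ i j : Fin n, (tridiag n a b i j) ^ 2
      = (if (i : ℕ) = (j : ℕ) then a ^ 2 else 0)
        + (if (i : ℕ) + 1 = (j : ℕ) then b ^ 2 else 0)
        + (if (j : ℕ) + 1 = (i : ℕ) then b ^ 2 else 0) := by
    intro i j
    simp only [tridiag, Matrix.of_apply]
    split_ifs <;> (try (exfalso; omega)) <;> ring
  have hrow : ∀ i : Fin n, (∑ j, (tridiag n a b i j) ^ 2)
      = a ^ 2 + (if (i:ℕ) + 1 < n then b ^ 2 else 0) + (if 1 ≤ (i:ℕ) then b ^ 2 else 0) := by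
    intro i
    rw [Finset.sum_congr rfl fun j _ => hsq i j]
    rw [Finset.sum_add_distrib, Finset.sum_add_distrib]
    rw [sum_ite_nat_eq (i : ℕ) (fun _ => a ^ 2),
        sum_ite_nat_eq ((i : ℕ) + 1) (fun _ => b ^ 2),
        sum_ite_nat_succ (i : ℕ) (fun _ => b ^ 2)]
    rw [dif_pos i.2]
    have hi1 : (i : ℕ) - 1 < n := by omega
    by_cases h2 : (i:ℕ) + 1 < n <;> by_cases h3 : 1 ≤ (i:ℕ) <;>
      simp [h2, h3, hi1]
  rw [Finset.sum_congr rfl fun i _ => hrow i]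
  rw [Finset.sum_add_distrib, Finset.sum_add_distrib]
  have c1 : (∑ _i : Fin n, a ^ 2) = n * a ^ 2 := by
    simp [Finset.sum_const, mul_comm]
  have c2 : (∑ i : Fin n, if (i:ℕ) + 1 < n then b ^ 2 else 0) = ((n:ℝ) - 1) * b ^ 2 := by
    rw [Fin.sum_univ_eq_sum_range (fun m => if m + 1 < n then b ^ 2 else 0)]
    obtain ⟨N, rfl⟩ : ∃ N, n = N + 1 := ⟨n - 1, by omega⟩
    rw [sum_range_ite_succ_lt]
    push_cast
    ring
  have c3 : (∑ i : Fin n, if 1 ≤ (i:ℕ) then b ^ 2 else 0) = ((n:ℝ) - 1) * b ^ 2 := by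
    rw [Fin.sum_univ_eq_sum_range (fun m => if 1 ≤ m then b ^ 2 else 0)]
    obtain ⟨N, rfl⟩ : ∃ N, n = N + 1 := ⟨n - 1, by omega⟩
    rw [sum_range_ite_one_le]
    push_cast
    ring
  rw [c1, c2, c3]
  ring

/-- if `h` minimizes `|λ_k|/κ(k)`, then `S*^𝒯 = (n; δ*, σ*)` attains the minimum of
`‖T − S‖_F` over singular symmetric tridiagonal Toeplitz matrices `S`, and the structured distance
to singularity is `d_F^𝒯(T) = |λ_h|/κ(h)`. -/
theorem stmt_7 (n : ℕ) (hn : 2 ≤ n) (δ σ : ℝ) (hσ : σ ≠ 0)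
    (h : ℕ) (h1 : 1 ≤ h) (hh : h ≤ n)
    (hmin : ∀ k : ℕ, 1 ≤ k → k ≤ n →
      |lam n δ σ h| / kap n h ≤ |lam n δ σ k| / kap n k)
    (c δs σs : ℝ) (hc : c = Real.cos (h * Real.pi / (n + 1)))
    (hδs : δs = 2 * ((n : ℝ) * c ^ 2 * δ - ((n : ℝ) - 1) * c * σ) /
      ((n : ℝ) - 1 + 2 * (n : ℝ) * c ^ 2))
    (hσs : σs = (((n : ℝ) - 1) * σ - (n : ℝ) * c * δ) /
      ((n : ℝ) - 1 + 2 * (n : ℝ) * c ^ 2)) :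
    (tridiag n δs σs).det = 0 ∧
    frobNorm (tridiag n δ σ - tridiag n δs σs) = |lam n δ σ h| / kap n h ∧
    IsLeast {r : ℝ | ∃ S : Matrix (Fin n) (Fin n) ℝ,
        S.det = 0 ∧ (∃ d s : ℝ, S = tridiag n d s) ∧ r = frobNorm (tridiag n δ σ - S)}
      (|lam n δ σ h| / kap n h) := by
  have hn2R : (2:ℝ) ≤ (n:ℝ) := by exact_mod_cast hn
  have hn1R : (1:ℝ) ≤ (n:ℝ) - 1 := by linarith
  have hnR : (0:ℝ) < (n:ℝ) := by linarith
  have hnne : (n:ℝ) ≠ 0 := ne_of_gt hnR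
  have hn1ne : (n:ℝ) - 1 ≠ 0 := by linarith
  have hDpos : 0 < (n:ℝ) - 1 + 2 * (n:ℝ) * c ^ 2 := by nlinarith [sq_nonneg c]
  have hDne : (n:ℝ) - 1 + 2 * (n:ℝ) * c ^ 2 ≠ 0 := ne_of_gt hDpos
  have hlam : lam n δ σ h = δ + 2 * σ * c := by rw [lam, hc]
  have hkap_sq : ∀ k : ℕ, (kap n k) ^ 2
      = ((n:ℝ) - 1 + 2 * (n:ℝ) * (Real.cos (k * Real.pi / (n+1)))^2)
        / ((n:ℝ) * ((n:ℝ) - 1)) := by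
    intro k
    rw [kap, Real.sq_sqrt]
    · field_simp
    · have t1 : (0:ℝ) < 1 / (n:ℝ) := by positivity
      have t2 : (0:ℝ) ≤ 2 / ((n:ℝ) - 1) * (Real.cos (k * Real.pi / (n+1)))^2 := by
        apply mul_nonneg (div_nonneg (by norm_num) (by linarith)) (sq_nonneg _)
      linarith
  have hkap_pos : ∀ k : ℕ, 0 < kap n k := by
    intro k
    apply Real.sqrt_pos.mpr
    have t1 : (0:ℝ) < 1 / (n:ℝ) := by positivity
    have t2 : (0:ℝ) ≤ 2 / ((n:ℝ) - 1) * (Real.cos (k * Real.pi / (n+1)))^2 :=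
      mul_nonneg (div_nonneg (by norm_num) (by linarith)) (sq_nonneg _)
    linarith
  have hzero : δs + 2 * σs * c = 0 := by
    rw [hδs, hσs]
    field_simp
    ring
  have part1 : (tridiag n δs σs).det = 0 := by
    apply tridiag_det_zero n (by omega) δs σs h h1 hh
    rw [← hc]
    exact hzero
  have ha : δ - δs = ((n:ℝ) - 1) * (lam n δ σ h) / ((n:ℝ) - 1 + 2 * (n:ℝ) * c ^ 2) := by
    rw [hδs, hlam]
    field_simp
    ring
  have hb : σ - σs = (n:ℝ) * c * (lam n δ σ h) / ((n:ℝ) - 1 + 2 * (n:ℝ) * c ^ 2) := by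
    rw [hσs, hlam]
    field_simp
    ring
  have hQ : (n:ℝ) * (δ - δs)^2 + 2 * ((n:ℝ) - 1) * (σ - σs)^2
      = (lam n δ σ h / kap n h)^2 := by
    have hk2 : (kap n h)^2 = ((n:ℝ) - 1 + 2*(n:ℝ)*c^2) / ((n:ℝ)*((n:ℝ)-1)) := by
      rw [hkap_sq h, hc]
    rw [div_pow, hk2, ha, hb]
    field_simp
  have part2 : frobNorm (tridiag n δ σ - tridiag n δs σs) = |lam n δ σ h| / kap n h := by
    rw [tridiag_sub]
    show Real.sqrt _ = _
    rw [tridiag_frob_sq n (by omega), hQ, Real.sqrt_sq_eq_abs, abs_div,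
        abs_of_pos (hkap_pos h)]
  have key : ∀ (k : ℕ) (a b : ℝ),
      |a + 2 * Real.cos (k * Real.pi / (n+1)) * b| / kap n k
        ≤ Real.sqrt ((n:ℝ) * a^2 + 2 * ((n:ℝ) - 1) * b^2) := by
    intro k a b
    set ck := Real.cos (k * Real.pi / (n+1)) with hck
    have hQnn : 0 ≤ (n:ℝ) * a^2 + 2 * ((n:ℝ) - 1) * b^2 := by
      nlinarith [sq_nonneg a, sq_nonneg b]
    rw [div_le_iff₀ (hkap_pos k)]
    have hrw : Real.sqrt ((n:ℝ) * a^2 + 2 * ((n:ℝ) - 1) * b^2) * kap n k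
        = Real.sqrt (((n:ℝ) * a^2 + 2 * ((n:ℝ) - 1) * b^2) * (kap n k)^2) := by
      rw [Real.sqrt_mul hQnn, Real.sqrt_sq (hkap_pos k).le]
    rw [hrw, ← Real.sqrt_sq_eq_abs]
    apply Real.sqrt_le_sqrt
    rw [hkap_sq k, ← hck, ← mul_div_assoc,
        le_div_iff₀ (by nlinarith : (0:ℝ) < (n:ℝ) * ((n:ℝ) - 1))]
    have hexp : ((n:ℝ) * a^2 + 2*((n:ℝ)-1)*b^2) * ((n:ℝ)-1+2*(n:ℝ)*ck^2)
        - (a + 2*ck*b)^2 * ((n:ℝ)*((n:ℝ)-1))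
        = 2 * ((n:ℝ)*ck*a - ((n:ℝ)-1)*b)^2 := by ring
    linarith [sq_nonneg ((n:ℝ)*ck*a - ((n:ℝ)-1)*b), hexp]
  refine ⟨part1, part2, ⟨tridiag n δs σs, part1, ⟨δs, σs, rfl⟩, part2.symm⟩, ?_⟩
  rintro r ⟨S, hSdet, ⟨d, s, rfl⟩, rfl⟩
  obtain ⟨k, hk1, hkn, heig⟩ := tridiag_singular_eigen n hn d s hSdet
  have hlamk : lam n δ σ k
      = (δ - d) + 2 * Real.cos (k * Real.pi / (n+1)) * (σ - s) := by
    rw [lam]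
    linarith [heig]
  calc |lam n δ σ h| / kap n h ≤ |lam n δ σ k| / kap n k := hmin k hk1 hkn
    _ ≤ Real.sqrt ((n:ℝ) * (δ - d)^2 + 2 * ((n:ℝ) - 1) * (σ - s)^2) := by
        rw [hlamk]; exact key k _ _
    _ = frobNorm (tridiag n δ σ - tridiag n d s) := by
        rw [tridiag_sub]
        show _ = Real.sqrt _
        rw [tridiag_frob_sq n (by omega)]
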